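/- arXiv:2412.05621 — 3 statements merged into one kernel-verified Lean document; each statement's English description precedes it below -/
import Mathlib

section
/- For θ > 0 let F(s;θ) denote the cdf of the uniform distribution on [0,θ]: F(s;θ) = 0 for s ≤ 0, F(s;θ) = s/θ for 0 < s < θ, and F(s;θ) = 1 for s ≥ θ. Then for all ψ, ψ₀ > 0: ∫_{−∞}^{∞} (F(s;ψ) − F(s;ψ₀))² ds = (ψ − ψ₀)²/(3ψ₀) if ψ ≤ ψ₀, and = (ψ − ψ₀)²/(3ψ) if ψ > ψ₀. -/
open MeasureTheory

lemma cramer_key (F : ℝ → ℝ → ℝ)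
    (hF : ∀ s θ : ℝ, 0 < θ →
      F s θ = if s ≤ 0 then 0 else if s < θ then s / θ else 1)
    (a b : ℝ) (ha : 0 < a) (hab : a ≤ b) :
    ∫ s : ℝ, (F s a - F s b) ^ 2 = (b - a) ^ 2 / (3 * b) := by
  have hb : 0 < b := ha.trans_le hab
  set f : ℝ → ℝ := fun s => (F s a - F s b) ^ 2 with hf
  have h0 : ∀ x ∉ Set.Ioc (0:ℝ) b, f x = 0 := by
    intro x hx
    simp only [Set.mem_Ioc, not_and_or, not_lt, not_le] at hx
    rcases hx with hx | hx
    · simp [hf, hF x a ha, hF x b hb, hx]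
    · have hxa : ¬ x ≤ 0 := by linarith
      have : ¬ x < a := by linarith
      have : ¬ x < b := by linarith
      simp [hf, hF x a ha, hF x b hb, hxa, *]
  have e1 : ∫ s : ℝ, f s = ∫ s in (0:ℝ)..b, f s := by
    rw [intervalIntegral.integral_of_le hb.le,
      setIntegral_eq_integral_of_forall_compl_eq_zero h0]
  have hg1 : Set.EqOn f (fun s => (s / a - s / b) ^ 2) (Set.uIcc 0 a) := by
    intro s hs
    rw [Set.uIcc_of_le ha.le, Set.mem_Icc] at hs
    rcases eq_or_lt_of_le hs.1 with h | h
    · subst h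
      simp [hf, hF 0 a ha, hF 0 b hb]
    · have h1 : ¬ s ≤ 0 := not_le.mpr h
      have hFa : F s a = s / a := by
        rcases lt_or_eq_of_le hs.2 with h2 | h2
        · simp [hF s a ha, h1, h2]
        · rw [h2, hF a a ha]
          simp [not_le.mpr ha, lt_irrefl, div_self ha.ne']
      have hFb : F s b = s / b := by
        rcases lt_or_eq_of_le (hs.2.trans hab) with h2 | h2
        · simp [hF s b hb, h1, h2]
        · rw [h2, hF b b hb]
          simp [not_le.mpr hb, lt_irrefl, div_self hb.ne']
      simp [hf, hFa, hFb]
  have hg2 : Set.EqOn f (fun s => (1 - s / b) ^ 2) (Set.uIcc a b) := by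
    intro s hs
    rw [Set.uIcc_of_le hab, Set.mem_Icc] at hs
    have h1 : ¬ s ≤ 0 := not_le.mpr (ha.trans_le hs.1)
    have hFa : F s a = 1 := by
      simp [hF s a ha, h1, not_lt.mpr hs.1]
    have hFb : F s b = s / b := by
      rcases lt_or_eq_of_le hs.2 with h2 | h2
      · simp [hF s b hb, h1, h2]
      · rw [h2, hF b b hb]
        simp [not_le.mpr hb, lt_irrefl, div_self hb.ne']
    simp [hf, hFa, hFb]
  have c1 : Continuous fun s : ℝ => (s / a - s / b) ^ 2 := by fun_prop
  have c2 : Continuous fun s : ℝ => (1 - s / b) ^ 2 := by fun_prop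
  have i1 : IntervalIntegrable f volume 0 a :=
    (c1.intervalIntegrable 0 a).congr
      (fun x hx => (hg1 (Set.uIoc_subset_uIcc hx)).symm)
  have i2 : IntervalIntegrable f volume a b :=
    (c2.intervalIntegrable a b).congr
      (fun x hx => (hg2 (Set.uIoc_subset_uIcc hx)).symm)
  have split : ∫ s in (0:ℝ)..b, f s = (∫ s in (0:ℝ)..a, f s) + ∫ s in a..b, f s :=
    (intervalIntegral.integral_add_adjacent_intervals i1 i2).symm
  have v1 : ∫ s in (0:ℝ)..a, f s = (b - a) ^ 2 * a / (3 * b ^ 2) := by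
    rw [intervalIntegral.integral_congr hg1]
    have : (fun s : ℝ => (s / a - s / b) ^ 2) = fun s => (1 / a - 1 / b) ^ 2 * s ^ 2 := by
      funext s; ring
    rw [this, intervalIntegral.integral_const_mul, integral_pow]
    field_simp
    ring
  have v2 : ∫ s in a..b, f s = (b - a) ^ 3 / (3 * b ^ 2) := by
    rw [intervalIntegral.integral_congr hg2]
    have h1 : (fun s : ℝ => (1 - s / b) ^ 2) = fun s => (1 / b) ^ 2 * (b - s) ^ 2 := by
      funext s; rw [one_sub_div hb.ne', div_pow]; ring
    rw [h1, intervalIntegral.integral_const_mul,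
      intervalIntegral.integral_comp_sub_left (fun x => x ^ 2) b, integral_pow]
    simp only [sub_self]
    field_simp
    push_cast
    ring
  rw [e1, split, v1, v2]
  field_simp
  ring

/-- The squared Cramér distance between the cdf of `U[0,ψ]` and the cdf of `U[0,ψ₀]`:
`∫ (F(s;ψ) − F(s;ψ₀))² ds = (ψ−ψ₀)²/(3ψ₀)` if `ψ ≤ ψ₀`, and `(ψ−ψ₀)²/(3ψ)` if `ψ > ψ₀`. -/
theorem stmt_12 (F : ℝ → ℝ → ℝ)
    (hF : ∀ s θ : ℝ, 0 < θ →
      F s θ = if s ≤ 0 then 0 else if s < θ then s / θ else 1)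
    (ψ ψ₀ : ℝ) (hψ : 0 < ψ) (hψ₀ : 0 < ψ₀) :
    (ψ ≤ ψ₀ → ∫ s : ℝ, (F s ψ - F s ψ₀) ^ 2 = (ψ - ψ₀) ^ 2 / (3 * ψ₀)) ∧
    (ψ₀ < ψ → ∫ s : ℝ, (F s ψ - F s ψ₀) ^ 2 = (ψ - ψ₀) ^ 2 / (3 * ψ)) := by
  constructor
  · intro h
    have := cramer_key F hF ψ ψ₀ hψ h
    rw [show ((ψ₀ - ψ) ^ 2 : ℝ) = (ψ - ψ₀) ^ 2 by ring] at this
    exact this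
  · intro h
    have := cramer_key F hF ψ₀ ψ hψ₀ h.le
    have e : ∀ s, (F s ψ₀ - F s ψ) ^ 2 = (F s ψ - F s ψ₀) ^ 2 := fun s => by ring
    simp only [e] at this
    exact this
end

section
/- For θ ∈ (0,1) let F(y;θ) be the cdf of the two-sided uniform model: F(y;θ) = 0 for y ≤ 0, F(y;θ) = y/(4θ) for 0 < y ≤ θ, F(y;θ) = 1 − 3(1−y)/(4(1−θ)) for θ < y ≤ 1, and F(y;θ) = 1 for y > 1. Fix ψ₀ ∈ (0,1) and define D(y;ψ₀) = −y/(4ψ₀²) for 0 < y < ψ₀, D(y;ψ₀) = −3(1−y)/(4(1−ψ₀)²) for ψ₀ < y < 1, and D(y;ψ₀) = 0 otherwise (including at y = ψ₀), and set R(y;ψ,ψ₀) = F(y;ψ) − F(y;ψ₀) − (ψ−ψ₀)D(y;ψ₀). Then for all ψ ∈ (0,1): ∫_{−∞}^{∞} R(y;ψ,ψ₀)² dy = −(ψ−ψ₀)³(4ψ(ψ₀−1) + 12ψ₀² − 4ψ₀ + 1)/(48(ψ−1)(ψ₀−1)ψ₀²) if ψ < ψ₀, and = (ψ−ψ₀)³(12ψψ₀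 + 4ψ₀² − 8ψ₀ + 1)/(48ψψ₀(1−ψ₀)²) if ψ ≥ ψ₀. In particular, ∫ R(y;ψ,ψ₀)² dy / (ψ−ψ₀)² → 0 as ψ → ψ₀, for every value of ψ₀ ∈ (0,1). -/
open MeasureTheory Topology Filter

lemma polyInt (p q a b : ℝ) :
    ∫ t in a..b, (p + q * t) ^ 2
      = (p ^ 2 * b + p * q * b ^ 2 + q ^ 2 * b ^ 3 / 3)
        - (p ^ 2 * a + p * q * a ^ 2 + q ^ 2 * a ^ 3 / 3) := by
  have hc : Continuous fun t : ℝ => (p + q * t) ^ 2 := by fun_prop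
  have h : ∀ x ∈ Set.uIcc a b,
      HasDerivAt (fun t : ℝ => p ^ 2 * t + p * q * t ^ 2 + q ^ 2 * t ^ 3 / 3)
        ((p + q * x) ^ 2) x := by
    intro x _
    have h1 := (((hasDerivAt_id x).const_mul (p ^ 2)).add
      ((hasDerivAt_pow 2 x).const_mul (p * q))).add
      (((hasDerivAt_pow 3 x).const_mul (q ^ 2)).div_const 3)
    refine HasDerivAt.congr_deriv h1 ?_
    push_cast
    ring
  rw [intervalIntegral.integral_eq_sub_of_hasDerivAt h (hc.intervalIntegrable a b)]

lemma pieceInt (g : ℝ → ℝ) (a b p q : ℝ)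
    (hcong : ∀ᵐ y : ℝ, y ∈ Set.uIoc a b → g y = (p + q * y) ^ 2) :
    IntervalIntegrable g volume a b ∧
      ∫ y in a..b, g y = (p ^ 2 * b + p * q * b ^ 2 + q ^ 2 * b ^ 3 / 3)
        - (p ^ 2 * a + p * q * a ^ 2 + q ^ 2 * a ^ 3 / 3) := by
  have hc : Continuous fun t : ℝ => (p + q * t) ^ 2 := by fun_prop
  constructor
  · exact (hc.intervalIntegrable a b).congr_ae
      (Filter.EventuallyEq.symm ((ae_restrict_iff' measurableSet_uIoc).2 hcong))
  · rw [intervalIntegral.integral_congr_ae hcong, polyInt]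

lemma splitInt (g : ℝ → ℝ) (a b : ℝ)
    (hsupp : ∀ y : ℝ, y ∉ Set.Ioc (0:ℝ) 1 → g y = 0)
    (h1 : IntervalIntegrable g volume 0 a) (h2 : IntervalIntegrable g volume a b)
    (h3 : IntervalIntegrable g volume b 1) :
    ∫ y, g y = (∫ y in (0:ℝ)..a, g y) + (∫ y in a..b, g y) + (∫ y in b..1, g y) := by
  have hg : g = Set.indicator (Set.Ioc (0:ℝ) 1) g := by
    funext y
    by_cases h : y ∈ Set.Ioc (0:ℝ) 1
    · rw [Set.indicator_of_mem h]
    · rw [Set.indicator_of_notMem h, hsupp y h]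
  calc ∫ y, g y = ∫ y, Set.indicator (Set.Ioc (0:ℝ) 1) g y := by rw [← hg]
    _ = ∫ y in Set.Ioc (0:ℝ) 1, g y := integral_indicator measurableSet_Ioc
    _ = ∫ y in (0:ℝ)..1, g y := (intervalIntegral.integral_of_le (by linarith)).symm
    _ = _ := by
        rw [← intervalIntegral.integral_add_adjacent_intervals (h1.trans h2) h3,
          ← intervalIntegral.integral_add_adjacent_intervals h1 h2]

set_option maxHeartbeats 4000000 in
/-- Norm-differentiability of the two-sided uniform cdf at every `ψ₀ ∈ (0,1)`
(Example 3.1(ii)): with the pointwise parameter derivative `D(y;ψ₀)` (set to `0`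
at the kink `y = ψ₀` and off `(0,1)`) and remainder
`R(y;ψ,ψ₀) = F(y;ψ) − F(y;ψ₀) − (ψ−ψ₀)D(y;ψ₀)`, the squared `L²`-norm of `R` is given
by the stated cubic expressions, and `∫ R² dy / (ψ−ψ₀)² → 0` as `ψ → ψ₀`. -/
theorem stmt_15 (F : ℝ → ℝ → ℝ)
    (hF : ∀ y θ : ℝ, 0 < θ → θ < 1 →
      F y θ = if y ≤ 0 then 0 else if y ≤ θ then y / (4 * θ)
        else if y ≤ 1 then 1 - 3 * (1 - y) / (4 * (1 - θ)) else 1)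
    (ψ₀ : ℝ) (hψ₀ : ψ₀ ∈ Set.Ioo (0 : ℝ) 1)
    (D : ℝ → ℝ)
    (hD : ∀ y : ℝ, D y =
      if 0 < y ∧ y < ψ₀ then -y / (4 * ψ₀ ^ 2)
      else if ψ₀ < y ∧ y < 1 then -(3 * (1 - y)) / (4 * (1 - ψ₀) ^ 2) else 0)
    (R : ℝ → ℝ → ℝ)
    (hR : ∀ y ψ : ℝ, R y ψ = F y ψ - F y ψ₀ - (ψ - ψ₀) * D y) :
    (∀ ψ ∈ Set.Ioo (0 : ℝ) 1, ψ < ψ₀ →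
      ∫ y : ℝ, (R y ψ) ^ 2 =
        -((ψ - ψ₀) ^ 3 * (4 * ψ * (ψ₀ - 1) + 12 * ψ₀ ^ 2 - 4 * ψ₀ + 1)) /
          (48 * (ψ - 1) * (ψ₀ - 1) * ψ₀ ^ 2)) ∧
    (∀ ψ ∈ Set.Ioo (0 : ℝ) 1, ψ₀ ≤ ψ →
      ∫ y : ℝ, (R y ψ) ^ 2 =
        (ψ - ψ₀) ^ 3 * (12 * ψ * ψ₀ + 4 * ψ₀ ^ 2 - 8 * ψ₀ + 1) /
          (48 * ψ * ψ₀ * (1 - ψ₀) ^ 2)) ∧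
    Tendsto (fun ψ : ℝ => (∫ y : ℝ, (R y ψ) ^ 2) / (ψ - ψ₀) ^ 2) (𝓝[≠] ψ₀) (𝓝 0) := by
  obtain ⟨hψ₀0, hψ₀1⟩ := hψ₀
  have hψ₀ne : ψ₀ ≠ 0 := ne_of_gt hψ₀0
  have hψ₀1ne : (1 : ℝ) - ψ₀ ≠ 0 := by intro h; apply absurd hψ₀1; linarith
  have hae : ∀ᵐ y : ℝ, y ≠ ψ₀ := by
    rw [MeasureTheory.ae_iff]
    simpa using MeasureTheory.measure_singleton (μ := (volume : Measure ℝ)) ψ₀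
  -- support
  have hsupp : ∀ ψ ∈ Set.Ioo (0:ℝ) 1, ∀ y : ℝ, y ∉ Set.Ioc (0:ℝ) 1 →
      (fun y => (R y ψ) ^ 2) y = 0 := by
    rintro ψ ⟨hψ0, hψ1⟩ y hy
    simp only [Set.mem_Ioc, not_and, not_le] at hy
    simp only []
    rw [hR, hF y ψ hψ0 hψ1, hF y ψ₀ hψ₀0 hψ₀1, hD]
    by_cases hy0 : y ≤ 0
    · rw [if_pos hy0, if_pos hy0, if_neg (by rintro ⟨h1, h2⟩; linarith),
        if_neg (by rintro ⟨h1, h2⟩; linarith)]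
      ring
    · have hy1 : 1 < y := hy (not_le.1 hy0)
      rw [if_neg hy0, if_neg (by push_neg; linarith), if_neg (by push_neg; linarith),
        if_neg hy0, if_neg (by push_neg; linarith), if_neg (by push_neg; linarith),
        if_neg (by rintro ⟨h1, h2⟩; linarith), if_neg (by rintro ⟨h1, h2⟩; linarith)]
      ring
  -- part 1
  have key1 : ∀ ψ ∈ Set.Ioo (0 : ℝ) 1, ψ < ψ₀ →
      ∫ y : ℝ, (R y ψ) ^ 2 =
        -((ψ - ψ₀) ^ 3 * (4 * ψ * (ψ₀ - 1) + 12 * ψ₀ ^ 2 - 4 * ψ₀ + 1)) /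
          (48 * (ψ - 1) * (ψ₀ - 1) * ψ₀ ^ 2) := by
    rintro ψ ⟨hψ0, hψ1⟩ hlt
    have hψne : ψ ≠ 0 := ne_of_gt hψ0
    have hψ1ne : (1 : ℝ) - ψ ≠ 0 := by intro h; apply absurd hψ1; linarith
    have c1 : ∀ᵐ y : ℝ, y ∈ Set.uIoc (0:ℝ) ψ →
        (R y ψ) ^ 2 = ((0:ℝ) + (ψ - ψ₀) ^ 2 / (4 * ψ * ψ₀ ^ 2) * y) ^ 2 := by
      refine Filter.Eventually.of_forall fun y hy => ?_
      rw [Set.uIoc_of_le (le_of_lt hψ0)] at hy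
      obtain ⟨hy0, hyψ⟩ := hy
      rw [hR, hF y ψ hψ0 hψ1, hF y ψ₀ hψ₀0 hψ₀1, hD,
        if_neg (by linarith), if_pos hyψ, if_neg (by linarith), if_pos (by linarith),
        if_pos ⟨hy0, by linarith⟩]
      congr 1
      field_simp
      ring
    have c2 : ∀ᵐ y : ℝ, y ∈ Set.uIoc ψ ψ₀ →
        (R y ψ) ^ 2 = ((1 - 4 * ψ) / (4 * (1 - ψ))
          + (3 * ψ₀ ^ 2 + 2 * ψ * ψ₀ - 2 * ψ₀ + ψ - ψ ^ 2) / (4 * ψ₀ ^ 2 * (1 - ψ)) * y) ^ 2 := by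
      filter_upwards [hae] with y hne hy
      rw [Set.uIoc_of_le (le_of_lt hlt)] at hy
      obtain ⟨hyψ, hyψ₀⟩ := hy
      have hylt : y < ψ₀ := lt_of_le_of_ne hyψ₀ hne
      rw [hR, hF y ψ hψ0 hψ1, hF y ψ₀ hψ₀0 hψ₀1, hD,
        if_neg (by linarith), if_neg (by linarith), if_pos (by linarith),
        if_neg (by linarith), if_pos hyψ₀,
        if_pos ⟨by linarith, hylt⟩]
      congr 1
      field_simp
      ring
    have c3 : ∀ᵐ y : ℝ, y ∈ Set.uIoc ψ₀ 1 →
        (R y ψ) ^ 2 = (-(3 * (ψ - ψ₀) ^ 2) / (4 * (1 - ψ) * (1 - ψ₀) ^ 2)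
          + 3 * (ψ - ψ₀) ^ 2 / (4 * (1 - ψ) * (1 - ψ₀) ^ 2) * y) ^ 2 := by
      refine Filter.Eventually.of_forall fun y hy => ?_
      rw [Set.uIoc_of_le (le_of_lt hψ₀1)] at hy
      obtain ⟨hyψ₀, hy1⟩ := hy
      rw [hR, hF y ψ hψ0 hψ1, hF y ψ₀ hψ₀0 hψ₀1, hD,
        if_neg (by linarith), if_neg (by linarith), if_pos hy1,
        if_neg (by linarith), if_neg (by linarith), if_pos hy1,
        if_neg (by rintro ⟨h1, h2⟩; linarith)]
      by_cases hye : y < 1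
      · rw [if_pos ⟨hyψ₀, hye⟩]
        congr 1
        field_simp
        ring
      · have hy1' : y = 1 := le_antisymm hy1 (not_lt.1 hye)
        rw [if_neg (by rintro ⟨h1, h2⟩; linarith)]
        subst hy1'
        congr 1
        field_simp
        try ring
    have P1 := pieceInt (fun y => (R y ψ) ^ 2) 0 ψ 0
        ((ψ - ψ₀) ^ 2 / (4 * ψ * ψ₀ ^ 2)) c1
    have P2 := pieceInt (fun y => (R y ψ) ^ 2) ψ ψ₀
        ((1 - 4 * ψ) / (4 * (1 - ψ)))
        ((3 * ψ₀ ^ 2 + 2 * ψ * ψ₀ - 2 * ψ₀ + ψ - ψ ^ 2) / (4 * ψ₀ ^ 2 * (1 - ψ))) c2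
    have P3 := pieceInt (fun y => (R y ψ) ^ 2) ψ₀ 1
        (-(3 * (ψ - ψ₀) ^ 2) / (4 * (1 - ψ) * (1 - ψ₀) ^ 2))
        (3 * (ψ - ψ₀) ^ 2 / (4 * (1 - ψ) * (1 - ψ₀) ^ 2)) c3
    have h1 : ψ - 1 ≠ 0 := fun h => hψ1ne (by linarith)
    have h2 : ψ₀ - 1 ≠ 0 := fun h => hψ₀1ne (by linarith)
    rw [splitInt (fun y => (R y ψ) ^ 2) ψ ψ₀ (hsupp ψ ⟨hψ0, hψ1⟩) P1.1 P2.1 P3.1,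
      P1.2, P2.2, P3.2]
    simp only [div_pow]
    field_simp
    ring
  -- part 2
  have key2 : ∀ ψ ∈ Set.Ioo (0 : ℝ) 1, ψ₀ ≤ ψ →
      ∫ y : ℝ, (R y ψ) ^ 2 =
        (ψ - ψ₀) ^ 3 * (12 * ψ * ψ₀ + 4 * ψ₀ ^ 2 - 8 * ψ₀ + 1) /
          (48 * ψ * ψ₀ * (1 - ψ₀) ^ 2) := by
    rintro ψ ⟨hψ0, hψ1⟩ hle
    have hψne : ψ ≠ 0 := ne_of_gt hψ0
    have hψ1ne : (1 : ℝ) - ψ ≠ 0 := by intro h; apply absurd hψ1; linarith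
    have c1 : ∀ᵐ y : ℝ, y ∈ Set.uIoc (0:ℝ) ψ₀ →
        (R y ψ) ^ 2 = ((0:ℝ) + (ψ - ψ₀) ^ 2 / (4 * ψ * ψ₀ ^ 2) * y) ^ 2 := by
      filter_upwards [hae] with y hne hy
      rw [Set.uIoc_of_le (le_of_lt hψ₀0)] at hy
      obtain ⟨hy0, hyψ₀⟩ := hy
      have hylt : y < ψ₀ := lt_of_le_of_ne hyψ₀ hne
      rw [hR, hF y ψ hψ0 hψ1, hF y ψ₀ hψ₀0 hψ₀1, hD,
        if_neg (by linarith), if_pos (by linarith), if_neg (by linarith), if_pos hyψ₀,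
        if_pos ⟨hy0, hylt⟩]
      congr 1
      field_simp
      ring
    have c2 : ∀ᵐ y : ℝ, y ∈ Set.uIoc ψ₀ ψ →
        (R y ψ) ^ 2 = ((-4 * ψ₀ ^ 2 + 2 * ψ₀ + 3 * ψ - 1) / (4 * (1 - ψ₀) ^ 2)
          + (ψ₀ ^ 2 + 6 * ψ * ψ₀ - 2 * ψ₀ - 3 * ψ ^ 2 - 3 * ψ + 1) / (4 * ψ * (1 - ψ₀) ^ 2)
            * y) ^ 2 := by
      refine Filter.Eventually.of_forall fun y hy => ?_
      rw [Set.uIoc_of_le hle] at hy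
      obtain ⟨hyψ₀, hyψ⟩ := hy
      rw [hR, hF y ψ hψ0 hψ1, hF y ψ₀ hψ₀0 hψ₀1, hD,
        if_neg (by linarith), if_pos hyψ,
        if_neg (by linarith), if_neg (by linarith), if_pos (by linarith),
        if_neg (by rintro ⟨h1, h2⟩; linarith), if_pos ⟨hyψ₀, by linarith⟩]
      congr 1
      field_simp
      ring
    have c3 : ∀ᵐ y : ℝ, y ∈ Set.uIoc ψ 1 →
        (R y ψ) ^ 2 = (-(3 * (ψ - ψ₀) ^ 2) / (4 * (1 - ψ) * (1 - ψ₀) ^ 2)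
          + 3 * (ψ - ψ₀) ^ 2 / (4 * (1 - ψ) * (1 - ψ₀) ^ 2) * y) ^ 2 := by
      refine Filter.Eventually.of_forall fun y hy => ?_
      rw [Set.uIoc_of_le (le_of_lt hψ1)] at hy
      obtain ⟨hyψ, hy1⟩ := hy
      rw [hR, hF y ψ hψ0 hψ1, hF y ψ₀ hψ₀0 hψ₀1, hD,
        if_neg (by linarith), if_neg (by linarith), if_pos hy1,
        if_neg (by linarith), if_neg (by linarith), if_pos hy1,
        if_neg (by rintro ⟨h1, h2⟩; linarith)]
      by_cases hye : y < 1
      · rw [if_pos ⟨by linarith, hye⟩]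
        congr 1
        field_simp
        ring
      · have hy1' : y = 1 := le_antisymm hy1 (not_lt.1 hye)
        rw [if_neg (by rintro ⟨h1, h2⟩; linarith)]
        subst hy1'
        congr 1
        field_simp
        try ring
    have P1 := pieceInt (fun y => (R y ψ) ^ 2) 0 ψ₀ 0
        ((ψ - ψ₀) ^ 2 / (4 * ψ * ψ₀ ^ 2)) c1
    have P2 := pieceInt (fun y => (R y ψ) ^ 2) ψ₀ ψ
        ((-4 * ψ₀ ^ 2 + 2 * ψ₀ + 3 * ψ - 1) / (4 * (1 - ψ₀) ^ 2))
        ((ψ₀ ^ 2 + 6 * ψ * ψ₀ - 2 * ψ₀ - 3 * ψ ^ 2 - 3 * ψ + 1) / (4 * ψ * (1 - ψ₀) ^ 2)) c2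
    have P3 := pieceInt (fun y => (R y ψ) ^ 2) ψ 1
        (-(3 * (ψ - ψ₀) ^ 2) / (4 * (1 - ψ) * (1 - ψ₀) ^ 2))
        (3 * (ψ - ψ₀) ^ 2 / (4 * (1 - ψ) * (1 - ψ₀) ^ 2)) c3
    have h1 : ψ - 1 ≠ 0 := fun h => hψ1ne (by linarith)
    have h2 : ψ₀ - 1 ≠ 0 := fun h => hψ₀1ne (by linarith)
    rw [splitInt (fun y => (R y ψ) ^ 2) ψ₀ ψ (hsupp ψ ⟨hψ0, hψ1⟩) P1.1 P2.1 P3.1,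
      P1.2, P2.2, P3.2]
    simp only [div_pow]
    field_simp
    ring
  refine ⟨key1, key2, ?_⟩
  -- the limit
  have hd1 : (48 * (ψ₀ - 1) * (ψ₀ - 1) * ψ₀ ^ 2 : ℝ) ≠ 0 := by
    have h1 : ψ₀ - 1 ≠ 0 := by intro h; apply absurd hψ₀1; linarith
    exact mul_ne_zero (mul_ne_zero (mul_ne_zero (by norm_num) h1) h1) (pow_ne_zero 2 hψ₀ne)
  have hd2 : (48 * ψ₀ * ψ₀ * (1 - ψ₀) ^ 2 : ℝ) ≠ 0 := by
    exact mul_ne_zero (mul_ne_zero (mul_ne_zero (by norm_num) hψ₀ne) hψ₀ne)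
      (pow_ne_zero 2 hψ₀1ne)
  have t1 : Tendsto (fun ψ : ℝ =>
      -((ψ - ψ₀) * (4 * ψ * (ψ₀ - 1) + 12 * ψ₀ ^ 2 - 4 * ψ₀ + 1)) /
        (48 * (ψ - 1) * (ψ₀ - 1) * ψ₀ ^ 2)) (𝓝 ψ₀) (𝓝 0) := by
    have hnum : Tendsto (fun ψ : ℝ =>
        -((ψ - ψ₀) * (4 * ψ * (ψ₀ - 1) + 12 * ψ₀ ^ 2 - 4 * ψ₀ + 1))) (𝓝 ψ₀) (𝓝 0) := by
      have hc : Continuous fun ψ : ℝ =>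
          -((ψ - ψ₀) * (4 * ψ * (ψ₀ - 1) + 12 * ψ₀ ^ 2 - 4 * ψ₀ + 1)) := by fun_prop
      simpa using hc.tendsto ψ₀
    have hden : Tendsto (fun ψ : ℝ => 48 * (ψ - 1) * (ψ₀ - 1) * ψ₀ ^ 2) (𝓝 ψ₀)
        (𝓝 (48 * (ψ₀ - 1) * (ψ₀ - 1) * ψ₀ ^ 2)) := by
      have hc : Continuous fun ψ : ℝ => 48 * (ψ - 1) * (ψ₀ - 1) * ψ₀ ^ 2 := by fun_prop
      exact hc.tendsto ψ₀
    simpa [Pi.div_def] using hnum.div hden hd1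
  have t2 : Tendsto (fun ψ : ℝ =>
      (ψ - ψ₀) * (12 * ψ * ψ₀ + 4 * ψ₀ ^ 2 - 8 * ψ₀ + 1) /
        (48 * ψ * ψ₀ * (1 - ψ₀) ^ 2)) (𝓝 ψ₀) (𝓝 0) := by
    have hnum : Tendsto (fun ψ : ℝ =>
        (ψ - ψ₀) * (12 * ψ * ψ₀ + 4 * ψ₀ ^ 2 - 8 * ψ₀ + 1)) (𝓝 ψ₀) (𝓝 0) := by
      have hc : Continuous fun ψ : ℝ =>
          (ψ - ψ₀) * (12 * ψ * ψ₀ + 4 * ψ₀ ^ 2 - 8 * ψ₀ + 1) := by fun_prop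
      simpa using hc.tendsto ψ₀
    have hden : Tendsto (fun ψ : ℝ => 48 * ψ * ψ₀ * (1 - ψ₀) ^ 2) (𝓝 ψ₀)
        (𝓝 (48 * ψ₀ * ψ₀ * (1 - ψ₀) ^ 2)) := by
      have hc : Continuous fun ψ : ℝ => 48 * ψ * ψ₀ * (1 - ψ₀) ^ 2 := by fun_prop
      exact hc.tendsto ψ₀
    simpa [Pi.div_def] using hnum.div hden hd2
  set f₁ : ℝ → ℝ := fun ψ =>
    -((ψ - ψ₀) * (4 * ψ * (ψ₀ - 1) + 12 * ψ₀ ^ 2 - 4 * ψ₀ + 1)) /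
      (48 * (ψ - 1) * (ψ₀ - 1) * ψ₀ ^ 2) with hf₁
  set f₂ : ℝ → ℝ := fun ψ =>
    (ψ - ψ₀) * (12 * ψ * ψ₀ + 4 * ψ₀ ^ 2 - 8 * ψ₀ + 1) /
      (48 * ψ * ψ₀ * (1 - ψ₀) ^ 2) with hf₂
  have hcomb : Tendsto (fun ψ : ℝ => if ψ < ψ₀ then f₁ ψ else f₂ ψ) (𝓝 ψ₀) (𝓝 0) := by
    apply squeeze_zero_norm (a := fun ψ => |f₁ ψ| + |f₂ ψ|)
    · intro ψ
      rw [Real.norm_eq_abs]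
      by_cases h : ψ < ψ₀
      · rw [if_pos h]; exact le_add_of_nonneg_right (abs_nonneg _)
      · rw [if_neg h]; exact le_add_of_nonneg_left (abs_nonneg _)
    · simpa using t1.abs.add t2.abs
  apply Tendsto.congr' ?_ (hcomb.mono_left nhdsWithin_le_nhds)
  have hIoo : ∀ᶠ ψ in 𝓝[≠] ψ₀, ψ ∈ Set.Ioo (0 : ℝ) 1 :=
    ((isOpen_Ioo.eventually_mem (⟨hψ₀0, hψ₀1⟩ : ψ₀ ∈ Set.Ioo (0:ℝ) 1)).filter_mono
      nhdsWithin_le_nhds)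
  have hne : ∀ᶠ ψ in 𝓝[≠] ψ₀, ψ ≠ ψ₀ := eventually_mem_nhdsWithin
  filter_upwards [hIoo, hne] with ψ hmem hneψ
  have hsub : ψ - ψ₀ ≠ 0 := sub_ne_zero.2 hneψ
  by_cases h : ψ < ψ₀
  · rw [if_pos h, key1 ψ hmem h, hf₁]
    have h1 : ψ - 1 ≠ 0 := by
      intro hh
      have : ψ = 1 := by linarith
      exact absurd hmem.2 (by rw [this]; exact lt_irrefl 1)
    have h2 : ψ₀ - 1 ≠ 0 := by intro hh; apply absurd hψ₀1; linarith
    field_simp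
  · rw [if_neg h, key2 ψ hmem (not_lt.1 h), hf₂]
    have h1 : ψ ≠ 0 := ne_of_gt hmem.1
    field_simp
end

section
/- For θ ∈ (0,1) let F(y;θ) be the cdf of the two-sided uniform model (F(y;θ) = y/(4θ) for 0 < y ≤ θ, 1 − 3(1−y)/(4(1−θ)) for θ < y ≤ 1, 0 for y ≤ 0, 1 for y > 1), with quantile function F^{-1}(s;θ) = 4θs for 0 ≤ s ≤ 1/4 and F^{-1}(s;θ) = 1 − 4(1−θ)(1−s)/3 for 1/4 < s ≤ 1. Then for all ψ, ψ₀ ∈ (0,1): ∫_0^1 (F^{-1}(s;ψ) − F^{-1}(s;ψ₀))² ds = (ψ − ψ₀)²/3. -/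
open MeasureTheory

/-- The squared 2-Wasserstein distance between two two-sided uniform distributions with
parameters `ψ, ψ₀ ∈ (0,1)`: with quantile function `F⁻¹(s;θ) = 4θs` for `s ≤ 1/4` and
`1 − 4(1−θ)(1−s)/3` for `1/4 < s ≤ 1`, one has
`∫₀¹ (F⁻¹(s;ψ) − F⁻¹(s;ψ₀))² ds = (ψ−ψ₀)²/3`. -/
theorem stmt_16 (Finv : ℝ → ℝ → ℝ)
    (hFinv : ∀ θ : ℝ, 0 < θ → θ < 1 → ∀ s ∈ Set.Icc (0 : ℝ) 1,
      Finv s θ = if s ≤ 1 / 4 then 4 * θ * s else 1 - 4 * (1 - θ) * (1 - s) / 3)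
    (ψ ψ₀ : ℝ) (hψ : ψ ∈ Set.Ioo (0 : ℝ) 1) (hψ₀ : ψ₀ ∈ Set.Ioo (0 : ℝ) 1) :
    ∫ s in (0 : ℝ)..1, (Finv s ψ - Finv s ψ₀) ^ 2 = (ψ - ψ₀) ^ 2 / 3 := by
  set d : ℝ := ψ - ψ₀ with hd
  set g : ℝ → ℝ := fun s => 16 * d ^ 2 * (if s ≤ 1 / 4 then s ^ 2 else (1 - s) ^ 2 / 9)
    with hg
  have hcong : Set.EqOn (fun s => (Finv s ψ - Finv s ψ₀) ^ 2) g (Set.uIcc (0 : ℝ) 1) := by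
    intro s hs
    rw [Set.uIcc_of_le (by norm_num : (0:ℝ) ≤ 1)] at hs
    simp only [hg]
    rw [hFinv ψ hψ.1 hψ.2 s hs, hFinv ψ₀ hψ₀.1 hψ₀.2 s hs]
    split_ifs <;> ring
  rw [intervalIntegral.integral_congr hcong]
  have hint1 : IntervalIntegrable g volume 0 (1/4) := by
    rw [intervalIntegrable_iff_integrableOn_Ioc_of_le (by norm_num)]
    apply (Continuous.integrableOn_Ioc (by continuity :
        Continuous fun s : ℝ => 16 * d ^ 2 * s ^ 2)).congr_fun _ measurableSet_Ioc
    intro s hs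
    simp only [hg]
    rw [if_pos hs.2]
  have hint2 : IntervalIntegrable g volume (1/4) 1 := by
    rw [intervalIntegrable_iff_integrableOn_Ioc_of_le (by norm_num)]
    apply (Continuous.integrableOn_Ioc (by continuity :
        Continuous fun s : ℝ => 16 * d ^ 2 * ((1 - s) ^ 2 / 9))).congr_fun _ measurableSet_Ioc
    intro s hs
    simp only [hg]
    rw [if_neg (not_le.mpr hs.1)]
  rw [← intervalIntegral.integral_add_adjacent_intervals hint1 hint2]
  have e1 : ∫ s in (0:ℝ)..(1/4), g s = ∫ s in (0:ℝ)..(1/4), 16 * d ^ 2 * s ^ 2 := by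
    apply intervalIntegral.integral_congr
    intro s hs
    rw [Set.uIcc_of_le (by norm_num : (0:ℝ) ≤ 1/4)] at hs
    simp only [hg]
    rw [if_pos hs.2]
  have e2 : ∫ s in (1/4:ℝ)..1, g s
      = ∫ s in (1/4:ℝ)..1, 16 * d ^ 2 * ((1 - s) ^ 2 / 9) := by
    apply intervalIntegral.integral_congr_ae
    filter_upwards [] with s hs
    rw [Set.uIoc_of_le (by norm_num : (1/4:ℝ) ≤ 1)] at hs
    simp only [hg]
    rw [if_neg (not_le.mpr hs.1)]
  rw [e1, e2]
  have i1 : ∫ s in (0:ℝ)..(1/4), 16 * d ^ 2 * s ^ 2 = d ^ 2 / 12 := by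
    rw [intervalIntegral.integral_const_mul, integral_pow]
    norm_num
    ring
  have i2 : ∫ s in (1/4:ℝ)..1, 16 * d ^ 2 * ((1 - s) ^ 2 / 9) = d ^ 2 / 4 := by
    rw [intervalIntegral.integral_const_mul]
    have : ∫ s in (1/4:ℝ)..1, (1 - s) ^ 2 / 9
        = ∫ s in (1-(1:ℝ))..(1-(1/4:ℝ)), s ^ 2 / 9 := by
      rw [← intervalIntegral.integral_comp_sub_left (fun s => s ^ 2 / 9) 1]
    rw [this]
    norm_num
    ring
  rw [i1, i2]
  ring
end
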